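/- Let G be a finite group and H ≤ G. The element e_H = Σ_{K ≤ H} (μ(K,H)/[N_G(H):K]) · [G/K] of the rational Burnside algebra B_ℚ(G) = ℚ ⊗ B(G) is an idempotent, and for any subgroup U ≤ G, the number of U-fixed points |e_H^U| equals 1 if U is G-conjugate to H and 0 otherwise. -/

import Mathlib

open scoped Classical

noncomputable instance subgroupLocallyFiniteOrder {G : Type*} [Group G] [Fintype G] :
    LocallyFiniteOrder (Subgroup G) := Fintype.toLocallyFiniteOrder

/-- The mark of the transitive `G`-set `G/K` at the subgroup `U`: the number of
`U`-fixed points of `G/K`. -/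
noncomputable def burnsideMark {G : Type*} [Group G] [Fintype G] (K U : Subgroup G) : ℚ :=
  (Nat.card {x : G ⧸ K // ∀ u ∈ U, u • x = x} : ℚ)

/-- The mark at `U` of Gluck's element `e_H = Σ_{K ≤ H} (μ(K,H)/[N_G(H):K]) · [G/K]`
of the rational Burnside algebra `B_ℚ(G)`. -/
noncomputable def gluckMark {G : Type*} [Group G] [Fintype G] (H U : Subgroup G) : ℚ :=
  ∑ K ∈ Finset.univ.filter (· ≤ H),
    (IncidenceAlgebra.mu ℚ K H / (K.relIndex (Subgroup.normalizer (H : Set G)) : ℚ)) * burnsideMark K U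

section Aux

variable {G : Type*} [Group G]

lemma mapConj_mapConj (a b : G) (S : Subgroup G) :
    Subgroup.map (MulAut.conj a).toMonoidHom (Subgroup.map (MulAut.conj b).toMonoidHom S)
      = Subgroup.map (MulAut.conj (a * b)).toMonoidHom S := by
  rw [Subgroup.map_map]; congr 1; ext x; simp [mul_assoc]

lemma mapConj_one (S : Subgroup G) :
    Subgroup.map (MulAut.conj (1 : G)).toMonoidHom S = S := by ext x; simp

lemma mapConj_eq_self_iff (H : Subgroup G) (n : G) :
    Subgroup.map (MulAut.conj n).toMonoidHom H = H ↔ n ∈ (Subgroup.normalizer (H : Set G)) := by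
  rw [Subgroup.mem_normalizer_iff]
  constructor
  · intro M h
    constructor
    · intro hh; rw [← M]; exact ⟨h, hh, rfl⟩
    · intro hh
      rw [← M] at hh
      obtain ⟨h', hh', e⟩ := hh
      simp only [MulEquiv.coe_toMonoidHom, MulAut.conj_apply] at e
      have : h' = h := mul_left_cancel (mul_right_cancel e)
      exact this ▸ hh'
  · intro hn
    ext x
    simp only [Subgroup.mem_map, MulEquiv.coe_toMonoidHom, MulAut.conj_apply]
    constructor
    · rintro ⟨h, hh, rfl⟩; exact (hn h).1 hh
    · intro hx
      refine ⟨n⁻¹ * x * n, ?_, by group⟩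
      apply (hn (n⁻¹ * x * n)).2
      have e : n * (n⁻¹ * x * n) * n⁻¹ = x := by group
      rwa [e]

lemma exists_conj_iff (H U : Subgroup G) :
    (∃ g : G, Subgroup.map (MulAut.conj g).toMonoidHom H = U) ↔
      (∃ g : G, Subgroup.map (MulAut.conj g⁻¹).toMonoidHom U = H) := by
  constructor
  · rintro ⟨g, rfl⟩
    exact ⟨g, by rw [mapConj_mapConj, inv_mul_cancel, mapConj_one]⟩
  · rintro ⟨g, hg⟩
    exact ⟨g, by rw [← hg, mapConj_mapConj, mul_inv_cancel, mapConj_one]⟩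

variable [Fintype G]

lemma card_conj_eq (H U : Subgroup G)
    (hex : ∃ g : G, Subgroup.map (MulAut.conj g⁻¹).toMonoidHom U = H) :
    Nat.card {g : G // Subgroup.map (MulAut.conj g⁻¹).toMonoidHom U = H}
      = Nat.card (Subgroup.normalizer (H : Set G)) := by
  obtain ⟨g0, h0⟩ := hex
  have hU : U = Subgroup.map (MulAut.conj g0).toMonoidHom H := by
    rw [← h0, mapConj_mapConj, mul_inv_cancel, mapConj_one]
  have hiff : ∀ g : G, (Subgroup.map (MulAut.conj g⁻¹).toMonoidHom U = H) ↔
      (g0⁻¹ * g ∈ (Subgroup.normalizer (H : Set G))) := by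
    intro g
    rw [hU, mapConj_mapConj, ← inv_mem_iff, ← mapConj_eq_self_iff H]
    simp [mul_inv_rev]
  exact Nat.card_congr (Equiv.subtypeEquiv (Equiv.mulLeft g0⁻¹) (fun g => by
    simpa using hiff g))

lemma fixed_iff (K U : Subgroup G) (g : G) :
    (∀ u ∈ U, u • (QuotientGroup.mk g : G ⧸ K) = QuotientGroup.mk g) ↔
      Subgroup.map (MulAut.conj g⁻¹).toMonoidHom U ≤ K := by
  rw [Subgroup.map_le_iff_le_comap]
  constructor
  · intro h u hu
    have := h u⁻¹ (inv_mem hu)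
    rw [MulAction.Quotient.smul_mk, QuotientGroup.eq] at this
    simp only [smul_eq_mul, mul_inv_rev, inv_inv] at this
    simp only [Subgroup.mem_comap, MulEquiv.coe_toMonoidHom, MulAut.conj_apply, inv_inv]
    convert this using 2
  · intro h u hu
    rw [MulAction.Quotient.smul_mk, QuotientGroup.eq]
    have := h (inv_mem hu)
    simp only [Subgroup.mem_comap, MulEquiv.coe_toMonoidHom, MulAut.conj_apply, inv_inv] at this
    simp only [smul_eq_mul, mul_inv_rev]
    convert this using 2

lemma mark_mul_card (K U : Subgroup G) :
    burnsideMark K U * (Nat.card K : ℚ)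
      = (Nat.card {g : G // Subgroup.map (MulAut.conj g⁻¹).toMonoidHom U ≤ K} : ℚ) := by
  classical
  set t : Set (G ⧸ K) := {x | ∀ u ∈ U, u • x = x} with ht
  have e1 : {g : G // Subgroup.map (MulAut.conj g⁻¹).toMonoidHom U ≤ K} ≃
      (QuotientGroup.mk ⁻¹' t : Set G) := by
    refine Equiv.subtypeEquivRight fun g => ?_
    simp only [Set.mem_preimage, ht, Set.mem_setOf_eq]
    exact (fixed_iff K U g).symm
  have e2 := QuotientGroup.preimageMkEquivSubgroupProdSet K t
  have h3 : Nat.card {g : G // Subgroup.map (MulAut.conj g⁻¹).toMonoidHom U ≤ K}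
      = Nat.card K * Nat.card t := by
    rw [Nat.card_congr (e1.trans e2), Nat.card_prod]
  rw [h3]
  have h4 : Nat.card t = Nat.card {x : G ⧸ K // ∀ u ∈ U, u • x = x} := rfl
  rw [h4, burnsideMark]
  push_cast
  ring

lemma relindex_mul (H K : Subgroup G) (h : K ≤ (Subgroup.normalizer (H : Set G))) :
    (K.relIndex (Subgroup.normalizer (H : Set G)) : ℚ) * (Nat.card K : ℚ) = (Nat.card (Subgroup.normalizer (H : Set G)) : ℚ) := by
  have h1 := Subgroup.index_mul_card (K.subgroupOf (Subgroup.normalizer (H : Set G)))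
  have h2 : Nat.card (K.subgroupOf (Subgroup.normalizer (H : Set G))) = Nat.card K :=
    Nat.card_congr (Subgroup.subgroupOfEquivOfLe h).toEquiv
  rw [h2] at h1
  exact_mod_cast congrArg (Nat.cast : ℕ → ℚ) h1

lemma cardQ (p : G → Prop) :
    (Nat.card {g : G // p g} : ℚ) = ∑ g : G, if p g then 1 else 0 := by
  classical
  rw [Nat.card_eq_fintype_card, Fintype.card_subtype, Finset.sum_boole]

lemma gluckMark_eq (H U : Subgroup G) :
    gluckMark H U
      = (Nat.card {g : G // Subgroup.map (MulAut.conj g⁻¹).toMonoidHom U = H} : ℚ)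
        / (Nat.card (Subgroup.normalizer (H : Set G)) : ℚ) := by
  classical
  have hN : (Nat.card (Subgroup.normalizer (H : Set G)) : ℚ) ≠ 0 := by
    exact_mod_cast Nat.card_pos.ne'
  rw [gluckMark]
  have step1 : ∀ K ∈ Finset.univ.filter (· ≤ H),
      (IncidenceAlgebra.mu ℚ K H / (K.relIndex (Subgroup.normalizer (H : Set G)) : ℚ)) * burnsideMark K U
        = IncidenceAlgebra.mu ℚ K H
            * (Nat.card {g : G // Subgroup.map (MulAut.conj g⁻¹).toMonoidHom U ≤ K} : ℚ)
            / (Nat.card (Subgroup.normalizer (H : Set G)) : ℚ) := by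
    intro K hK
    have hKH : K ≤ H := by simpa using hK
    have hr := relindex_mul H K (hKH.trans Subgroup.le_normalizer)
    have hKne : (Nat.card K : ℚ) ≠ 0 := by exact_mod_cast Nat.card_pos.ne'
    have hrne : (K.relIndex (Subgroup.normalizer (H : Set G)) : ℚ) ≠ 0 := by
      intro h0; rw [h0, zero_mul] at hr; exact hN hr.symm
    rw [← mark_mul_card, ← hr]
    field_simp
  rw [Finset.sum_congr rfl step1, ← Finset.sum_div]
  congr 1
  have step2 : ∀ K : Subgroup G,
      (Nat.card {g : G // Subgroup.map (MulAut.conj g⁻¹).toMonoidHom U ≤ K} : ℚ)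
        = ∑ g : G, if Subgroup.map (MulAut.conj g⁻¹).toMonoidHom U ≤ K then 1 else 0 :=
    fun K => cardQ _
  calc
    ∑ K ∈ Finset.univ.filter (· ≤ H), IncidenceAlgebra.mu ℚ K H
        * (Nat.card {g : G // Subgroup.map (MulAut.conj g⁻¹).toMonoidHom U ≤ K} : ℚ)
      = ∑ g : G, ∑ K ∈ Finset.univ.filter (· ≤ H),
          if Subgroup.map (MulAut.conj g⁻¹).toMonoidHom U ≤ K then
            IncidenceAlgebra.mu ℚ K H else 0 := by
        rw [Finset.sum_comm]
        refine Finset.sum_congr rfl fun K _ => ?_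
        rw [step2, Finset.mul_sum]
        refine Finset.sum_congr rfl fun g _ => ?_
        split <;> simp
    _ = ∑ g : G,
          if Subgroup.map (MulAut.conj g⁻¹).toMonoidHom U = H then 1 else 0 := by
        refine Finset.sum_congr rfl fun g _ => ?_
        rw [← Finset.sum_filter]
        have hIcc : (Finset.univ.filter (· ≤ H)).filter
            (fun K => Subgroup.map (MulAut.conj g⁻¹).toMonoidHom U ≤ K)
            = Finset.Icc (Subgroup.map (MulAut.conj g⁻¹).toMonoidHom U) H := by
          ext K
          simp [Finset.mem_Icc, and_comm]
        rw [hIcc, IncidenceAlgebra.sum_Icc_mu_left]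
    _ = (Nat.card {g : G // Subgroup.map (MulAut.conj g⁻¹).toMonoidHom U = H} : ℚ) :=
        (cardQ _).symm

end Aux

/-- Gluck's idempotent formula: under the (injective) mark homomorphism of the rational
Burnside algebra, `e_H` has mark `1` at subgroups `U` conjugate to `H` and `0` otherwise;
in particular `e_H` is an idempotent of `B_ℚ(G)`. -/
theorem gluck_idempotent {G : Type*} [Group G] [Fintype G] (H : Subgroup G) :
    (∀ U : Subgroup G,
      gluckMark H U =
        if ∃ g : G, Subgroup.map (MulAut.conj g).toMonoidHom H = U then 1 else 0) ∧
    (∀ U : Subgroup G, gluckMark H U * gluckMark H U = gluckMark H U) := by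
  have hN : (Nat.card (Subgroup.normalizer (H : Set G)) : ℚ) ≠ 0 := by exact_mod_cast Nat.card_pos.ne'
  have first : ∀ U : Subgroup G,
      gluckMark H U =
        if ∃ g : G, Subgroup.map (MulAut.conj g).toMonoidHom H = U then 1 else 0 := by
    intro U
    rw [gluckMark_eq]
    by_cases hex : ∃ g : G, Subgroup.map (MulAut.conj g).toMonoidHom H = U
    · rw [if_pos hex]
      rw [exists_conj_iff] at hex
      rw [card_conj_eq H U hex, div_self hN]
    · rw [if_neg hex]
      rw [exists_conj_iff] at hex
      have : IsEmpty {g : G // Subgroup.map (MulAut.conj g⁻¹).toMonoidHom U = H} :=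
        ⟨fun ⟨g, hg⟩ => hex ⟨g, hg⟩⟩
      rw [Nat.card_of_isEmpty]
      simp
  refine ⟨first, fun U => ?_⟩
  rw [first U]
  split <;> norm_num
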